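/- Let n be a positive odd integer and define ξ(ε) = Σ_{k=1}^{2n+2} a_k ε^{k−1} with a_k = C(2n+2, k)·(−1)^{k+(n−1)/2}·(k+n+1)!!·k/(k!!·(n+1)!!) (up to an overall positive constant independent of k). Then for every x ∈ (0,1], ∫_x^1 ξ(ε)(ε² − x²)^{(n+1)/2} dε = c·x^{n+1}(1−x)^{2n+2} for an appropriate positive constant c. -/

import Mathlib

open Nat

open Finset

lemma my_alt_pow : ∀ d N : ℕ, d < N →
    ∑ k ∈ range (N+1), (-1:ℝ)^k * (N.choose k) * (k:ℝ)^d = 0 := by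
  intro d
  induction d using Nat.strong_induction_on with
  | _ d ih =>
    intro N hdN
    match d with
    | 0 =>
      have h := add_pow (-1 : ℝ) 1 N
      simp only [one_pow, mul_one, pow_zero] at h ⊢
      rw [← h]
      have h0 : N ≠ 0 := by omega
      have : (-1:ℝ) + 1 = 0 := by ring
      rw [this, zero_pow h0]
    | d + 1 =>
      obtain ⟨M, rfl⟩ : ∃ M, N = M + 1 := ⟨N - 1, by omega⟩
      rw [Finset.sum_range_succ']
      simp only [Nat.cast_zero, choose_zero_right, Nat.cast_one, pow_zero,
        zero_pow (Nat.succ_ne_zero d), mul_zero, add_zero]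
      push_cast
      have key : ∀ k : ℕ, (-1:ℝ)^(k+1) * ((M+1).choose (k+1)) * ((k:ℝ)+1)^(d+1)
          = -((M:ℝ)+1) * ((-1:ℝ)^k * (M.choose k) * ((k:ℝ)+1)^d) := by
        intro k
        have h2 : ((M+1).choose (k+1) * (k+1) : ℕ) = (M+1) * M.choose k :=
          (Nat.add_one_mul_choose_eq M k).symm
        have h2' : (((M+1).choose (k+1) : ℝ)) * ((k:ℝ)+1) = ((M:ℝ)+1) * (M.choose k) := by
          exact_mod_cast congrArg (Nat.cast : ℕ → ℝ) h2
        rw [pow_succ (-1:ℝ) k, pow_succ ((k:ℝ)+1) d]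
        linear_combination (-(-1:ℝ)^k * ((k:ℝ)+1)^d) * h2'
      rw [Finset.sum_congr rfl (fun k _ => key k), ← Finset.mul_sum]
      have inner : ∑ k ∈ range (M+1), ((-1:ℝ)^k * (M.choose k) * ((k:ℝ)+1)^d) = 0 := by
        have expand : ∀ k : ℕ, ((k:ℝ)+1)^d = ∑ e ∈ range (d+1), (k:ℝ)^e * (d.choose e) := by
          intro k; simpa using add_pow (k:ℝ) 1 d
        calc ∑ k ∈ range (M+1), ((-1:ℝ)^k * (M.choose k) * ((k:ℝ)+1)^d)
            = ∑ k ∈ range (M+1), ∑ e ∈ range (d+1),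
                (d.choose e : ℝ) * ((-1:ℝ)^k * (M.choose k) * (k:ℝ)^e) := by
              refine Finset.sum_congr rfl fun k _ => ?_
              rw [expand k, Finset.mul_sum]
              exact Finset.sum_congr rfl fun e _ => by ring
          _ = ∑ e ∈ range (d+1), (d.choose e : ℝ) *
                ∑ k ∈ range (M+1), ((-1:ℝ)^k * (M.choose k) * (k:ℝ)^e) := by
              rw [Finset.sum_comm]
              exact Finset.sum_congr rfl fun e _ => (Finset.mul_sum _ _ _).symm
          _ = 0 := by
              apply Finset.sum_eq_zero; intro e he
              rw [ih e (by simp at he; omega) M (by simp at he; omega), mul_zero]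
      rw [inner, mul_zero]

lemma my_dfac_prod : ∀ (j a : ℕ), (a + 2*j)‼ = a‼ * ∏ i ∈ range j, (a + 2*i + 2)
  | 0, a => by simp
  | j+1, a => by
    rw [show a + 2*(j+1) = (a + 2*j) + 2 by ring, Nat.doubleFactorial_add_two,
      Finset.prod_range_succ, my_dfac_prod j a]
    ring

lemma my_fac_prod : ∀ (j a : ℕ), a ! * ∏ i ∈ range j, (a + i + 1) = (a + j)!
  | 0, a => by simp
  | j+1, a => by
    rw [Finset.prod_range_succ, show a + (j+1) = (a + j) + 1 by ring, Nat.factorial_succ,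
      ← mul_assoc, my_fac_prod j a]
    ring

lemma my_sum_Icc (N : ℕ) (f : ℕ → ℝ) :
    ∑ k ∈ range (N+1), f k = f 0 + ∑ k ∈ Icc 1 N, f k := by
  have : range (N+1) = insert 0 (Icc 1 N) := by
    ext k; simp [Finset.mem_range, Finset.mem_insert, Finset.mem_Icc]; omega
  rw [this, Finset.sum_insert (by simp)]

lemma my_dfac_even (m j : ℕ) (h : j ≤ m) :
    ((2*m)‼ : ℝ) = ((2*(m-j))‼ : ℝ) * 2^j * (m ! : ℝ) / ((m-j)! : ℝ) := by
  have h2 : (2*m)‼ = (2*(m-j))‼ * ∏ i ∈ range j, (2*(m-j) + 2*i + 2) := by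
    rw [show 2*m = 2*(m-j) + 2*j by omega]; exact my_dfac_prod j _
  have h3 : ∏ i ∈ range j, (2*(m-j) + 2*i + 2) = 2^j * ∏ i ∈ range j, ((m-j) + i + 1) := by
    rw [show (2:ℕ)^j = ∏ _i ∈ range j, 2 from by simp, ← Finset.prod_mul_distrib]
    exact Finset.prod_congr rfl fun i _ => by ring
  have h4 : (m-j)! * ∏ i ∈ range j, ((m-j) + i + 1) = m ! := by
    rw [my_fac_prod j (m-j)]; congr 1; omega
  have hfj : ((m-j)! : ℝ) ≠ 0 := Nat.cast_ne_zero.mpr (Nat.factorial_ne_zero _)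
  field_simp
  rw [h2, h3]
  push_cast [← h4]
  ring

lemma my_ratio_prod (m j k : ℕ) (h : j ≤ m) :
    (((k+2*m)‼ : ℕ) : ℝ) / (((k+2*m-2*j)‼ : ℕ) : ℝ)
      = ∏ i ∈ range j, ((k:ℝ) + (2*(m-j)+2*i+2 : ℕ)) := by
  have e1 : k + 2*m - 2*j = k + 2*(m-j) := by omega
  have e2 : k + 2*m = (k + 2*(m-j)) + 2*j := by omega
  have h2 : (k+2*m)‼ = (k + 2*(m-j))‼ * ∏ i ∈ range j, (k + 2*(m-j) + 2*i + 2) := by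
    rw [e2]; exact my_dfac_prod j _
  rw [e1, h2]
  push_cast
  rw [mul_comm, mul_div_assoc, div_self (by exact_mod_cast Nat.cast_ne_zero.mpr (Nat.doubleFactorial_pos _).ne'), mul_one]
  exact Finset.prod_congr rfl fun i _ => by push_cast; ring

lemma my_S_vanish (m j : ℕ) (hm : 1 ≤ m) (h : j ≤ m) :
    ∑ k ∈ range (4*m+1), (-1:ℝ)^k * ((4*m).choose k : ℝ) *
      ((((k+2*m)‼ : ℕ) : ℝ) / (((k+2*m-2*j)‼ : ℕ) : ℝ)) = 0 := by
  calc ∑ k ∈ range (4*m+1), (-1:ℝ)^k * ((4*m).choose k : ℝ) *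
        ((((k+2*m)‼ : ℕ) : ℝ) / (((k+2*m-2*j)‼ : ℕ) : ℝ))
      = ∑ k ∈ range (4*m+1), ∑ t ∈ (range j).powerset,
          ((∏ i ∈ (range j) \ t, ((2*(m-j)+2*i+2 : ℕ) : ℝ)) *
            ((-1:ℝ)^k * ((4*m).choose k : ℝ) * (k:ℝ)^t.card)) := by
        refine Finset.sum_congr rfl fun k _ => ?_
        rw [my_ratio_prod m j k h, Finset.prod_add, Finset.mul_sum]
        refine Finset.sum_congr rfl fun t ht => ?_
        rw [Finset.prod_const]
        ring
    _ = ∑ t ∈ (range j).powerset,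
          ((∏ i ∈ (range j) \ t, ((2*(m-j)+2*i+2 : ℕ) : ℝ)) *
            ∑ k ∈ range (4*m+1), ((-1:ℝ)^k * ((4*m).choose k : ℝ) * (k:ℝ)^t.card)) := by
        rw [Finset.sum_comm]
        exact Finset.sum_congr rfl fun t _ => (Finset.mul_sum _ _ _).symm
    _ = 0 := by
        apply Finset.sum_eq_zero; intro t ht
        have hc : t.card ≤ j := by
          simpa using Finset.card_le_card (Finset.mem_powerset.mp ht)
        rw [my_alt_pow t.card (4*m) (by omega), mul_zero]

noncomputable def myF (x : ℝ) (m k : ℕ) (ε : ℝ) : ℝ :=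
  ∑ j ∈ range (m+1),
    (-2:ℝ)^(m-j) * (m ! : ℝ) / (j ! : ℝ) * (((k+2*m)‼ : ℕ) : ℝ) / (((k+2*m-2*j)‼ : ℕ) : ℝ)
      * (ε^2 - x^2)^j * ε^(k+2*m-2*j)

lemma myF_deriv (x : ℝ) : ∀ (m k : ℕ) (ε : ℝ),
    HasDerivAt (myF x m k)
      ((((k+2*m)‼ : ℕ) : ℝ) / ((k‼ : ℕ) : ℝ) * k * (ε^2 - x^2)^m * ε^(k-1)) ε := by
  intro m
  induction m with
  | zero =>
    intro k ε
    have hfun : myF x 0 k = fun ε : ℝ => ε ^ k := by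
      funext ε
      simp [myF, div_self (show ((k‼:ℕ):ℝ) ≠ 0 from Nat.cast_ne_zero.mpr (Nat.doubleFactorial_pos _).ne')]
    rw [hfun]
    simpa [div_self (show ((k‼:ℕ):ℝ) ≠ 0 from Nat.cast_ne_zero.mpr (Nat.doubleFactorial_pos _).ne')]
      using hasDerivAt_pow k ε
  | succ m ih =>
    intro k ε
    have hfun : myF x (m+1) k = fun ε : ℝ =>
        (-2) * ((m:ℝ)+1) * myF x m (k+2) ε
          + (((k+2*(m+1))‼ : ℕ) : ℝ) / ((k‼ : ℕ) : ℝ) * (ε^2 - x^2)^(m+1) * ε^k := by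
      funext ε
      rw [myF, Finset.sum_range_succ, myF, Finset.mul_sum]
      congr 1
      · refine Finset.sum_congr rfl fun j hj => ?_
        have hjm : j ≤ m := by simpa using Nat.lt_succ_iff.mp (Finset.mem_range.mp hj)
        have e1 : k + 2*(m+1) - 2*j = (k+2) + 2*m - 2*j := by omega
        have e2 : k + 2*(m+1) = (k+2) + 2*m := by omega
        have e3 : (m+1) - j = (m - j) + 1 := by omega
        rw [e1, e2, e3, pow_succ]
        push_cast [Nat.factorial_succ]
        ring
      · have e4 : (m+1) - (m+1) = 0 := by omega
        have e5 : k + 2*(m+1) - 2*(m+1) = k := by omega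
        have hf : (((m+1)! :ℕ):ℝ) ≠ 0 := Nat.cast_ne_zero.mpr (Nat.factorial_ne_zero _)
        rw [e4, e5, pow_zero]
        field_simp
    rw [hfun]
    have h1 := (ih (k+2) ε).const_mul ((-2) * ((m:ℝ)+1))
    have hp : HasDerivAt (fun ε : ℝ => ε^2 - x^2) (2*ε) ε := by
      simpa using (hasDerivAt_pow 2 ε).sub_const (x^2)
    have hq : HasDerivAt (fun ε : ℝ => (ε^2 - x^2)^(m+1))
        (((m:ℝ)+1) * (ε^2 - x^2)^m * (2*ε)) ε := by
      simpa using hp.fun_pow (m+1)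
    have h2 : HasDerivAt (fun ε : ℝ =>
        (((k+2*(m+1))‼ : ℕ) : ℝ) / ((k‼ : ℕ) : ℝ) * (ε^2 - x^2)^(m+1) * ε^k)
        ((((k+2*(m+1))‼ : ℕ) : ℝ) / ((k‼ : ℕ) : ℝ) *
          ((((m:ℝ)+1) * (ε^2 - x^2)^m * (2*ε)) * ε^k + (ε^2 - x^2)^(m+1) * (k * ε^(k-1)))) ε := by
      have := (hq.fun_mul (hasDerivAt_pow k ε)).const_mul ((((k+2*(m+1))‼ : ℕ) : ℝ) / ((k‼ : ℕ) : ℝ))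
      convert this using 1
      all_goals first | rfl | (funext ε; ring) | ring
    have hsum := h1.fun_add h2
    convert hsum using 1
    · rfl
    · rfl
    have hkey : (((k+2*(m+1))‼ : ℕ) : ℝ) = (((k+2+2*m)‼ : ℕ) : ℝ) := by
      congr 2; omega
    have hk2 : (((k+2)‼ : ℕ) : ℝ) = ((k:ℝ)+2) * ((k‼ : ℕ) : ℝ) := by
      rw [Nat.doubleFactorial_add_two]; push_cast; ring
    have hk0 : ((k‼ : ℕ) : ℝ) ≠ 0 := Nat.cast_ne_zero.mpr (Nat.doubleFactorial_pos _).ne'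
    have epow : ε^(k+2-1) = ε * ε^k := by
      rw [show k+2-1 = k+1 by omega, pow_succ]; ring
    rw [hkey, epow, hk2]
    push_cast
    field_simp
    ring

lemma myF_at_x (x : ℝ) (m k : ℕ) :
    myF x m k x = (-2:ℝ)^m * (m ! : ℝ) * x^(k+2*m) := by
  rw [myF]
  rw [Finset.sum_eq_single_of_mem 0 (by simp)]
  · have : (((k+2*m-2*0)‼:ℕ):ℝ) = (((k+2*m)‼:ℕ):ℝ) := by norm_num
    rw [this]
    have hne : (((k+2*m)‼:ℕ):ℝ) ≠ 0 := Nat.cast_ne_zero.mpr (Nat.doubleFactorial_pos _).ne'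
    field_simp
    simp
  · intro j _ hj
    rw [sub_self, zero_pow hj]
    ring

lemma myF_at_1 (x : ℝ) (m k : ℕ) :
    myF x m k 1 = ∑ j ∈ range (m+1),
      (-2:ℝ)^(m-j) * (m ! : ℝ) / (j ! : ℝ) * (((k+2*m)‼ : ℕ) : ℝ) / (((k+2*m-2*j)‼ : ℕ) : ℝ)
        * (1 - x^2)^j := by
  rw [myF]
  refine Finset.sum_congr rfl fun j _ => ?_
  norm_num

theorem stmt_15 (n : ℕ) (hn : Odd n) (c₀ : ℝ) (hc₀ : 0 < c₀) :
    ∃ c : ℝ, 0 < c ∧ ∀ x : ℝ, 0 < x → x ≤ 1 →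
      ∫ ε in x..(1 : ℝ),
          (∑ k ∈ Finset.Icc 1 (2 * n + 2),
            c₀ * (Nat.choose (2 * n + 2) k : ℝ) * (-1 : ℝ) ^ (k + (n - 1) / 2) *
              (Nat.doubleFactorial (k + n + 1) : ℝ) * (k : ℝ) /
              ((Nat.doubleFactorial k : ℝ) * (Nat.doubleFactorial (n + 1) : ℝ)) *
              ε ^ (k - 1)) *
          (ε ^ 2 - x ^ 2) ^ ((n + 1) / 2)
        = c * x ^ (n + 1) * (1 - x) ^ (2 * n + 2) := by
  refine ⟨c₀, hc₀, ?_⟩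
  intro x hx0 hx1
  obtain ⟨r, hr⟩ := hn
  set m : ℕ := r + 1 with hm
  have hm1 : 1 ≤ m := le_refl 1 |>.trans (by omega)
  have hn1 : n + 1 = 2*m := by omega
  have hN : 2*n+2 = 4*m := by omega
  have hhalf : (n+1)/2 = m := by omega
  have hr2 : (n-1)/2 = r := by omega
  set A : ℕ → ℝ := fun k =>
    c₀ * ((4*m).choose k : ℝ) * (-1:ℝ)^(k+r) / (((2*m)‼:ℕ):ℝ) with hA
  set Φ : ℝ → ℝ := fun ε => ∑ k ∈ Icc 1 (4*m), A k * myF x m k ε with hΦ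
  set g : ℝ → ℝ := fun ε =>
    (∑ k ∈ Finset.Icc 1 (2 * n + 2),
      c₀ * (Nat.choose (2 * n + 2) k : ℝ) * (-1 : ℝ) ^ (k + (n - 1) / 2) *
        (Nat.doubleFactorial (k + n + 1) : ℝ) * (k : ℝ) /
        ((Nat.doubleFactorial k : ℝ) * (Nat.doubleFactorial (n + 1) : ℝ)) *
        ε ^ (k - 1)) *
      (ε ^ 2 - x ^ 2) ^ ((n + 1) / 2) with hg
  have hk0 : ∀ k : ℕ, ((k‼ : ℕ) : ℝ) ≠ 0 :=
    fun k => Nat.cast_ne_zero.mpr (Nat.doubleFactorial_pos _).ne'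
  -- pointwise derivative
  have hderiv : ∀ ε : ℝ, HasDerivAt Φ (g ε) ε := by
    intro ε
    have h := HasDerivAt.fun_sum (u := Icc 1 (4*m))
      (fun k _ => (myF_deriv x m k ε).const_mul (A k))
    convert h using 1
    · rfl
    · rfl
    simp only [hg, hN, hhalf]
    rw [Finset.sum_mul]
    refine Finset.sum_congr rfl fun k hk => ?_
    have e1 : k + n + 1 = k + 2*m := by omega
    rw [e1, hr2, hn1, hA]
    field_simp
  -- integrability
  have hcont : Continuous g := by
    apply Continuous.mul
    · exact continuous_finset_sum _ fun k _ => Continuous.mul continuous_const (continuous_pow _)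
    · exact Continuous.pow (Continuous.sub (continuous_pow 2) continuous_const) _
  have hint := intervalIntegral.integral_eq_sub_of_hasDerivAt
    (f := Φ) (f' := g) (a := x) (b := 1)
    (fun ε _ => hderiv ε) (hcont.intervalIntegrable x 1)
  rw [hg] at hint
  rw [hint]
  -- Φ at x
  have hsign : (-1:ℝ)^(r + m) = -1 := Odd.neg_one_pow ⟨r, by omega⟩
  have hΦx : Φ x = -c₀ * x^(2*m) * ((1-x)^(4*m) - 1) := by
    simp only [hΦ]
    have hstep : ∀ k ∈ Icc 1 (4*m), A k * myF x m k x
        = -c₀ * x^(2*m) * (((4*m).choose k : ℝ) * (-x)^k) := by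
      intro k _
      rw [myF_at_x, hA, Nat.doubleFactorial_two_mul]
      have hf : (m ! : ℝ) ≠ 0 := Nat.cast_ne_zero.mpr (Nat.factorial_ne_zero _)
      have h2 : ((2:ℝ))^m ≠ 0 := by positivity
      have hnegpow : (-2:ℝ)^m = (-1:ℝ)^m * 2^m := by
        rw [show (-2:ℝ) = -1 * 2 by norm_num, mul_pow]
      have hxpow : x^(k+2*m) = x^k * x^(2*m) := by rw [pow_add]
      have hsplit : (-1:ℝ)^(k+r) * (-1:ℝ)^m = (-1:ℝ)^k * (-1:ℝ)^(r+m) := by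
        rw [← pow_add, ← pow_add]; congr 1; omega
      have hnx : (-x:ℝ)^k = (-1:ℝ)^k * x^k := by
        rw [show (-x:ℝ) = -1 * x by ring, mul_pow]
      have key : (-1:ℝ)^(k+r) * (-1:ℝ)^m = -(-1:ℝ)^k := by
        rw [← pow_add, show k+r+m = k+(r+m) by omega, pow_add, hsign]; ring
      push_cast
      rw [hnegpow, hxpow, hnx]
      field_simp
      linear_combination (((4*m).choose k : ℕ):ℝ) * key
    rw [Finset.sum_congr rfl hstep, ← Finset.mul_sum]
    have hbin : ∑ k ∈ Icc 1 (4*m), (((4*m).choose k : ℝ) * (-x)^k)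
        = (1-x)^(4*m) - 1 := by
      have h := add_pow (-x) (1:ℝ) (4*m)
      simp only [one_pow, mul_one] at h
      have h2 := my_sum_Icc (4*m) (fun k => (-x:ℝ)^k * ((4*m).choose k : ℝ))
      rw [← h, show (-x) + 1 = 1 - x by ring] at h2
      simp only [pow_zero, choose_zero_right, Nat.cast_one, one_mul] at h2
      rw [show ∑ k ∈ Icc 1 (4*m), (((4*m).choose k : ℝ) * (-x)^k)
        = ∑ k ∈ Icc 1 (4*m), ((-x:ℝ)^k * ((4*m).choose k : ℝ)) from
        Finset.sum_congr rfl fun k _ => by ring]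
      linarith
    rw [hbin]
  -- Φ at 1
  have hΦ1 : Φ 1 = c₀ * x^(2*m) := by
    simp only [hΦ]
    rw [Finset.sum_congr rfl (fun k (_ : k ∈ Icc 1 (4*m)) => by
      rw [myF_at_1 x m k, Finset.mul_sum])]
    rw [Finset.sum_comm]
    have hinner : ∀ j ∈ range (m+1),
        (∑ k ∈ Icc 1 (4*m), A k *
          ((-2:ℝ)^(m-j) * (m ! : ℝ) / (j ! : ℝ) * (((k+2*m)‼ : ℕ) : ℝ) / (((k+2*m-2*j)‼ : ℕ) : ℝ)
            * (1 - x^2)^j))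
        = (-c₀ * (-1:ℝ)^r) * ((1-x^2)^j * (-1:ℝ)^(m-j) * ((m.choose j : ℕ):ℝ)) := by
      intro j hj
      have hjm : j ≤ m := by simp at hj; omega
      have hj0 : ((j ! : ℕ):ℝ) ≠ 0 := Nat.cast_ne_zero.mpr (Nat.factorial_ne_zero _)
      have hmj0 : (((m-j)! : ℕ):ℝ) ≠ 0 := Nat.cast_ne_zero.mpr (Nat.factorial_ne_zero _)
      have hm0 : ((m ! : ℕ):ℝ) ≠ 0 := Nat.cast_ne_zero.mpr (Nat.factorial_ne_zero _)
      have hdd0 : ∀ d : ℕ, ((d‼ : ℕ):ℝ) ≠ 0 := fun d => Nat.cast_ne_zero.mpr (Nat.doubleFactorial_pos _).ne'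
      set B : ℝ := c₀ * (-1:ℝ)^r * (-2:ℝ)^(m-j) * (m ! : ℝ) / ((j ! : ℝ) * (((2*m)‼:ℕ):ℝ)) * (1-x^2)^j with hB
      have step1 : ∀ k ∈ Icc 1 (4*m), A k *
          ((-2:ℝ)^(m-j) * (m ! : ℝ) / (j ! : ℝ) * (((k+2*m)‼ : ℕ) : ℝ) / (((k+2*m-2*j)‼ : ℕ) : ℝ)
            * (1 - x^2)^j)
          = B * ((-1:ℝ)^k * (((4*m).choose k : ℕ):ℝ) *
              ((((k+2*m)‼ : ℕ) : ℝ) / (((k+2*m-2*j)‼ : ℕ) : ℝ))) := by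
        intro k _
        simp only [hA, hB]
        field_simp
        ring
      rw [Finset.sum_congr rfl step1, ← Finset.mul_sum]
      have hS : ∑ k ∈ Icc 1 (4*m), ((-1:ℝ)^k * (((4*m).choose k : ℕ):ℝ) *
            ((((k+2*m)‼ : ℕ) : ℝ) / (((k+2*m-2*j)‼ : ℕ) : ℝ)))
          = -( (((2*m)‼:ℕ):ℝ) / (((2*(m-j))‼:ℕ):ℝ) ) := by
        have h0 := my_S_vanish m j hm1 hjm
        have h1 := my_sum_Icc (4*m) (fun k => (-1:ℝ)^k * (((4*m).choose k : ℕ):ℝ) *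
            ((((k+2*m)‼ : ℕ) : ℝ) / (((k+2*m-2*j)‼ : ℕ) : ℝ)))
        rw [h0] at h1
        simp only [pow_zero, choose_zero_right, Nat.cast_one, one_mul, Nat.zero_add] at h1
        have e : 2*m - 2*j = 2*(m-j) := by omega
        rw [e] at h1
        linarith
      rw [hS]
      have e : 2*m - 2*j = 2*(m-j) := by omega
      have hratio : (((2*m)‼:ℕ):ℝ) / (((2*(m-j))‼:ℕ):ℝ) = 2^j * (m ! : ℝ) / (((m-j)! : ℕ):ℝ) := by
        rw [my_dfac_even m j hjm]
        field_simp
      rw [hratio, hB]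
      have hch : ((m.choose j : ℕ):ℝ) = (m ! : ℝ)/((j ! : ℝ) * (((m-j)! : ℕ):ℝ)) :=
        Nat.cast_choose ℝ hjm
      have h2m : (((2*m)‼:ℕ):ℝ) = 2^m * (m ! : ℝ) := by
        rw [Nat.doubleFactorial_two_mul]; push_cast; ring
      have hq : (-2:ℝ)^(m-j) * 2^j = (-1:ℝ)^(m-j) * 2^m := by
        rw [show (-2:ℝ) = -1*2 by norm_num, mul_pow, mul_assoc, ← pow_add,
          show m-j+j = m by omega]
      rw [hch, h2m]
      have h2 : ((2:ℝ))^m ≠ 0 := by positivity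
      field_simp
      linear_combination (-(1-x^2)^j) * hq
    rw [Finset.sum_congr rfl hinner, ← Finset.mul_sum]
    have hbin : ∑ j ∈ range (m+1), ((1-x^2)^j * (-1:ℝ)^(m-j) * ((m.choose j : ℕ):ℝ))
        = (-1:ℝ)^m * x^(2*m) := by
      have h := add_pow (1-x^2 : ℝ) (-1) m
      rw [← h, show (1-x^2:ℝ) + (-1) = -(x^2) by ring, neg_pow, ← pow_mul]
    rw [hbin]
    have h5 : (-1:ℝ)^r * (-1:ℝ)^m = -1 := by rw [← pow_add, hsign]
    linear_combination (-c₀ * x^(2*m)) * h5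
  rw [hΦ1, hΦx, hn1, hN]
  ring
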